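/- (Proposition 1, edges sharing one node, different SNPs in the same SNP-set) Let v1, v2, v3 be pairwise distinct nodes and p ≠ p' be distinct SNPs with q(p) = q(p'), and assume σ_f² + 2σ_g² + 2σ_h² > 0. Then Cor(L(v1,v3,p), L(v2,v3,p')) = (σ_f² + σ_g²)/(σ_f² + 2σ_g² + 2σ_h²). -/

import Mathlib

open MeasureTheory ProbabilityTheory

/-- Covariance of two real random variables: `Cov(X,Y) = E[(X - E X)(Y - E Y)]`. -/
noncomputable def cov {Ω : Type*} [MeasurableSpace Ω] (μ : Measure Ω) (X Y : Ω → ℝ) : ℝ :=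
  ∫ ω, (X ω - ∫ x, X x ∂μ) * (Y ω - ∫ x, Y x ∂μ) ∂μ

/-- Pearson correlation: `Cor(X,Y) = Cov(X,Y) / (Var(X)^{1/2} Var(Y)^{1/2})`. -/
noncomputable def cor {Ω : Type*} [MeasurableSpace Ω] (μ : Measure Ω) (X Y : Ω → ℝ) : ℝ :=
  cov μ X Y / (Real.sqrt (variance X μ) * Real.sqrt (variance Y μ))

section Helpers
set_option linter.unusedSectionVars false
variable {Ω : Type*} [MeasurableSpace Ω] {μ : Measure Ω} [IsProbabilityMeasure μ]

lemma integrable_mul_of_memLp_two {f g : Ω → ℝ} (hf : MemLp f 2 μ) (hg : MemLp g 2 μ) :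
    Integrable (fun ω => f ω * g ω) μ := by
  refine (hf.integrable_sq.add hg.integrable_sq).mono'
    (hf.aestronglyMeasurable.mul hg.aestronglyMeasurable) (ae_of_all _ fun ω => ?_)
  have := sq_nonneg (|f ω| - |g ω|)
  simp only [Real.norm_eq_abs, abs_mul, Pi.add_apply]
  nlinarith [sq_abs (f ω), sq_abs (g ω), abs_nonneg (f ω), abs_nonneg (g ω)]

lemma memLp_center {f : Ω → ℝ} (hf : MemLp f 2 μ) :
    MemLp (fun ω => f ω - ∫ x, f x ∂μ) 2 μ := hf.sub (memLp_const _)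

lemma cov_self {X : Ω → ℝ} (hX : MemLp X 2 μ) : cov μ X X = variance X μ := by
  rw [variance_eq_integral hX.aestronglyMeasurable.aemeasurable]
  refine integral_congr_ae (ae_of_all _ fun ω => ?_)
  simp [cov, pow_two]

lemma cov_indep {X Y : Ω → ℝ} (h : IndepFun X Y μ) (hX : MemLp X 2 μ) (hY : MemLp Y 2 μ) :
    cov μ X Y = 0 := by
  have h' : IndepFun (fun ω => X ω - ∫ x, X x ∂μ) (fun ω => Y ω - ∫ x, Y x ∂μ) μ :=
    h.comp (measurable_id.sub measurable_const) (measurable_id.sub measurable_const)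
  have hXi := hX.integrable one_le_two
  have hYi := hY.integrable one_le_two
  rw [cov, IndepFun.integral_fun_mul_eq_mul_integral h' (memLp_center hX).aestronglyMeasurable
    (memLp_center hY).aestronglyMeasurable]
  have : (∫ ω, (X ω - ∫ x, X x ∂μ) ∂μ) = 0 := by
    rw [integral_sub hXi (integrable_const _), integral_const]; simp
  rw [this, zero_mul]

lemma cov_fun_sum {n m : ℕ} (X : Fin n → Ω → ℝ) (Y : Fin m → Ω → ℝ)
    (hX : ∀ i, MemLp (X i) 2 μ) (hY : ∀ j, MemLp (Y j) 2 μ) :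
    cov μ (fun ω => ∑ i, X i ω) (fun ω => ∑ j, Y j ω) = ∑ i, ∑ j, cov μ (X i) (Y j) := by
  have hEX : (∫ x, ∑ i, X i x ∂μ) = ∑ i, ∫ x, X i x ∂μ :=
    integral_finset_sum _ fun i _ => (hX i).integrable one_le_two
  have hEY : (∫ x, ∑ j, Y j x ∂μ) = ∑ j, ∫ x, Y j x ∂μ :=
    integral_finset_sum _ fun j _ => (hY j).integrable one_le_two
  unfold cov
  rw [hEX, hEY]
  have key : ∀ ω : Ω, ((∑ i, X i ω) - ∑ i, ∫ x, X i x ∂μ) * ((∑ j, Y j ω) - ∑ j, ∫ x, Y j x ∂μ)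
      = ∑ i, ∑ j, (X i ω - ∫ x, X i x ∂μ) * (Y j ω - ∫ x, Y j x ∂μ) := by
    intro ω
    rw [← Finset.sum_sub_distrib, ← Finset.sum_sub_distrib, Finset.sum_mul_sum]
  simp_rw [key]
  rw [integral_finset_sum]
  · exact Finset.sum_congr rfl fun i _ => integral_finset_sum _ fun j _ =>
      integrable_mul_of_memLp_two (memLp_center (hX i)) (memLp_center (hY j))
  · exact fun i _ => integrable_finset_sum _ fun j _ =>
      integrable_mul_of_memLp_two (memLp_center (hX i)) (memLp_center (hY j))

end Helpers

/-- Proposition 1, edges sharing one node, different SNPs in the same SNP-set. -/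
theorem nrss_cor_shared_node_same_set
    {Ω Q V P : Type*} [MeasurableSpace Ω]
    (μ : Measure Ω) [IsProbabilityMeasure μ]
    (q : P → Q)
    (F : Q → Ω → ℝ) (G : V → Ω → ℝ) (H : V × P → Ω → ℝ)
    (σf2 σg2 σh2 : ℝ)
    (hIndep : iIndepFun (m := fun _ : Q ⊕ (V ⊕ V × P) => (inferInstance : MeasurableSpace ℝ))
      (Sum.elim F (Sum.elim G H)) μ)
    (hFmem : ∀ i, MemLp (F i) 2 μ)
    (hGmem : ∀ i, MemLp (G i) 2 μ)
    (hHmem : ∀ i, MemLp (H i) 2 μ)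
    (hFvar : ∀ i, variance (F i) μ = σf2)
    (hGvar : ∀ i, variance (G i) μ = σg2)
    (hHvar : ∀ i, variance (H i) μ = σh2)
    (L : V → V → P → Ω → ℝ)
    (hL : ∀ v v' p ω, L v v' p ω = F (q p) ω + G v ω + G v' ω + H (v, p) ω + H (v', p) ω)
    (v1 v2 v3 : V) (h12 : v1 ≠ v2) (h13 : v1 ≠ v3) (h23 : v2 ≠ v3)
    (p p' : P) (hp : p ≠ p') (hq : q p = q p')
    (hpos : 0 < σf2 + 2 * σg2 + 2 * σh2) :
    cor μ (L v1 v3 p) (L v2 v3 p') = (σf2 + σg2) / (σf2 + 2 * σg2 + 2 * σh2) := by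
  classical
  set Z := Sum.elim F (Sum.elim G H) with hZ
  have hZmem : ∀ i, MemLp (Z i) 2 μ := by
    rintro (a | b | c)
    · exact hFmem a
    · exact hGmem b
    · exact hHmem c
  have hcell : ∀ i j, cov μ (Z i) (Z j) = if i = j then variance (Z i) μ else 0 := by
    intro i j
    split
    · next h => rw [h]; exact cov_self (hZmem j)
    · next h => exact cov_indep (hIndep.indepFun h) (hZmem i) (hZmem j)
  let A : Fin 5 → Q ⊕ (V ⊕ V × P) :=
    ![Sum.inl (q p), Sum.inr (Sum.inl v1), Sum.inr (Sum.inl v3),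
      Sum.inr (Sum.inr (v1, p)), Sum.inr (Sum.inr (v3, p))]
  let B : Fin 5 → Q ⊕ (V ⊕ V × P) :=
    ![Sum.inl (q p'), Sum.inr (Sum.inl v2), Sum.inr (Sum.inl v3),
      Sum.inr (Sum.inr (v2, p')), Sum.inr (Sum.inr (v3, p'))]
  have hLA : L v1 v3 p = fun ω => ∑ i, Z (A i) ω := by
    funext ω; rw [hL]; simp [Fin.sum_univ_five, A, hZ]
  have hLB : L v2 v3 p' = fun ω => ∑ i, Z (B i) ω := by
    funext ω; rw [hL]; simp [Fin.sum_univ_five, B, hZ]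
  have hne : p' ≠ p := Ne.symm hp
  have h21 : v2 ≠ v1 := Ne.symm h12
  have h31 : v3 ≠ v1 := Ne.symm h13
  have h32 : v3 ≠ v2 := Ne.symm h23
  -- covariance
  have hcov : cov μ (L v1 v3 p) (L v2 v3 p') = σf2 + σg2 := by
    rw [hLA, hLB, cov_fun_sum _ _ (fun i => hZmem (A i)) (fun j => hZmem (B j))]
    simp only [hcell]
    simp only [hcell, Fin.sum_univ_five, A, B, Matrix.cons_val_zero, Matrix.cons_val_one,
      Matrix.head_cons, Matrix.cons_val_two, Matrix.tail_cons, Matrix.cons_val_three,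
      Matrix.cons_val_four, hZ, Sum.elim_inl, Sum.elim_inr]
    simp only [hq, Sum.inl.injEq, Sum.inr.injEq, Prod.mk.injEq, h12, h13, h23, hp, h21, h31,
      h32, hne, if_true, if_false, and_false, false_and, and_true, if_pos rfl, reduceCtorEq,
      ite_true, ite_false, not_false_iff]
    rw [hFvar, hGvar]
    ring
  have hvarconsole : ∀ (a b : V) (r : P), a ≠ b →
      variance (L a b r) μ = σf2 + 2 * σg2 + 2 * σh2 := by
    intro a b r hab
    let C : Fin 5 → Q ⊕ (V ⊕ V × P) :=
      ![Sum.inl (q r), Sum.inr (Sum.inl a), Sum.inr (Sum.inl b),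
        Sum.inr (Sum.inr (a, r)), Sum.inr (Sum.inr (b, r))]
    have hLC : L a b r = fun ω => ∑ i, Z (C i) ω := by
      funext ω; rw [hL]; simp [Fin.sum_univ_five, C, hZ]
    have hm : MemLp (L a b r) 2 μ := by
      rw [hLC]; exact memLp_finset_sum _ fun i _ => hZmem (C i)
    have hba : b ≠ a := Ne.symm hab
    rw [← cov_self hm]
    conv_lhs => rw [hLC]
    rw [cov_fun_sum _ _ (fun i => hZmem (C i)) (fun j => hZmem (C j))]
    simp only [hcell]
    simp only [hcell, Fin.sum_univ_five, C, Matrix.cons_val_zero, Matrix.cons_val_one,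
      Matrix.head_cons, Matrix.cons_val_two, Matrix.tail_cons, Matrix.cons_val_three,
      Matrix.cons_val_four, hZ, Sum.elim_inl, Sum.elim_inr]
    simp only [Sum.inl.injEq, Sum.inr.injEq, Prod.mk.injEq, hab, hba, if_true, if_false,
      and_true, if_pos rfl, reduceCtorEq, ite_true, ite_false, false_and]
    rw [hFvar, hGvar, hGvar, hHvar, hHvar]
    ring
  rw [cor, hcov, hvarconsole v1 v3 p h13, hvarconsole v2 v3 p' h23,
    Real.mul_self_sqrt hpos.le]
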